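/- Let K be a field of characteristic zero and n ≥ 2. If p ∈ K[x,y] satisfies p^n ∈ K[x,y]_0 (i.e., every monomial of p^n has total degree divisible by n), then there exists i ∈ ℤ/nℤ such that p ∈ K[x,y]_i (i.e., every monomial of p has total degree ≡ i (mod n)). -/

import Mathlib

open MvPolynomial

/-- The `i`-th piece (`i ∈ ℤ/nℤ`) of the `n`-grading of `K[x,y]`. -/
noncomputable def gradedPiece (K : Type*) [Field K] (n : ℕ) (i : ZMod n) :
    Submodule K (MvPolynomial (Fin 2) K) :=
  Submodule.span K {m | ∃ a b : ℕ, ((a + b : ℕ) : ZMod n) = i ∧ m = X 0 ^ a * X 1 ^ b}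

/-- Membership in a graded piece is a condition on the support. -/
lemma mem_gradedPiece_iff {K : Type*} [Field K] {n : ℕ} {i : ZMod n}
    {p : MvPolynomial (Fin 2) K} :
    p ∈ gradedPiece K n i ↔ ∀ m ∈ p.support, ((m 0 + m 1 : ℕ) : ZMod n) = i := by
  classical
  constructor
  · intro h
    refine Submodule.span_induction (p := fun q _ => ∀ m ∈ q.support,
      ((m 0 + m 1 : ℕ) : ZMod n) = i) ?_ ?_ ?_ ?_ h
    · rintro q ⟨a, b, hab, rfl⟩ m hm
      rw [X_pow_eq_monomial, X_pow_eq_monomial, monomial_mul, one_mul] at hm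
      rw [support_monomial, if_neg one_ne_zero] at hm
      rw [Finset.mem_singleton] at hm
      subst hm
      simpa using hab
    · intro m hm
      simp at hm
    · intro q r _ _ hq hr m hm
      rcases Finset.mem_union.mp (MvPolynomial.support_add hm) with h' | h'
      · exact hq m h'
      · exact hr m h'
    · intro a q _ hq m hm
      exact hq m (MvPolynomial.support_smul hm)
  · intro h
    rw [p.as_sum]
    refine Submodule.sum_mem _ fun m hm => ?_
    have hmono : (monomial m) (coeff m p)
        = (coeff m p) • (X (0 : Fin 2) ^ (m 0) * X 1 ^ (m 1)) := by
      rw [smul_eq_C_mul, monomial_eq,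
        Finsupp.prod_fintype _ _ (fun _ => pow_zero _), Fin.prod_univ_two]
    rw [hmono]
    exact Submodule.smul_mem _ _ (Submodule.subset_span ⟨m 0, m 1, h m hm, rfl⟩)

/-- Coefficients of `p(cx, cy)`. -/
lemma coeff_scale {L : Type*} [CommSemiring L] (c : L) (p : MvPolynomial (Fin 2) L)
    (m : Fin 2 →₀ ℕ) :
    coeff m (aeval (fun k => C c * X k) p) = c ^ (m 0 + m 1) * coeff m p := by
  induction p using MvPolynomial.induction_on' with
  | monomial d r =>
    have key : (aeval (fun k => C c * X k)) (monomial d r)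
        = monomial d (c ^ (d 0 + d 1) * r) := by
      rw [aeval_monomial, Finsupp.prod_fintype _ _ (fun _ => pow_zero _),
        Fin.prod_univ_two, monomial_eq, Finsupp.prod_fintype _ _ (fun _ => pow_zero _),
        Fin.prod_univ_two, MvPolynomial.algebraMap_eq]
      simp only [mul_pow, ← C_pow, pow_add, C_mul]
      ring
    rw [key, coeff_monomial, coeff_monomial]
    by_cases hdm : d = m
    · subst hdm; simp
    · simp [hdm]
  | add p q hp hq =>
    rw [map_add, coeff_add, coeff_add, hp, hq, mul_add]

/-- Key lemma: over a field containing a primitive `n`-th root of unity, if every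
monomial of `p ^ n` has total degree divisible by `n`, then any two monomials of `p`
have congruent total degrees mod `n`. -/
lemma key_congruence {L : Type*} [Field L] {n : ℕ} (hn : 2 ≤ n) {ζ : L}
    (hζ : IsPrimitiveRoot ζ n) {p : MvPolynomial (Fin 2) L} (hp0 : p ≠ 0)
    (hp : ∀ m ∈ (p ^ n).support, ((m 0 + m 1 : ℕ) : ZMod n) = 0)
    {m m' : Fin 2 →₀ ℕ} (hm : m ∈ p.support) (hm' : m' ∈ p.support) :
    ((m 0 + m 1 : ℕ) : ZMod n) = ((m' 0 + m' 1 : ℕ) : ZMod n) := by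
  have hn0 : n ≠ 0 := by omega
  haveI : NeZero n := ⟨hn0⟩
  set σ : MvPolynomial (Fin 2) L →ₐ[L] MvPolynomial (Fin 2) L :=
    aeval (fun k => C ζ * X k) with hσ
  -- `σ p ^ n = p ^ n` since `p ^ n` lies in the degree-zero piece.
  have hσpow : (σ p) ^ n = p ^ n := by
    rw [← map_pow]
    apply MvPolynomial.ext
    intro d
    rw [hσ, coeff_scale]
    rcases eq_or_ne (coeff d (p ^ n)) 0 with h | h
    · rw [h, mul_zero]
    · have hd0 : ((d 0 + d 1 : ℕ) : ZMod n) = 0 := hp d (mem_support_iff.mpr h)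
      have hdvd : n ∣ (d 0 + d 1) := (ZMod.natCast_eq_zero_iff _ _).mp hd0
      rw [(hζ.pow_eq_one_iff_dvd _).mpr hdvd, one_mul]
  -- Pass to the fraction field to conclude `σ p = ζ ^ i • p` for some `i`.
  set ι : MvPolynomial (Fin 2) L →+* FractionRing (MvPolynomial (Fin 2) L) :=
    algebraMap _ _ with hιdef
  have hι : Function.Injective ι := IsFractionRing.injective _ _
  have hB : ι p ≠ 0 := fun h => hp0 (hι (h.trans (map_zero ι).symm))
  have hCinj : Function.Injective (ι.comp (C : L →+* MvPolynomial (Fin 2) L)) := by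
    rw [RingHom.coe_comp]
    exact hι.comp (C_injective (Fin 2) L)
  have hζF : IsPrimitiveRoot (ι (C ζ)) n := hζ.map_of_injective hCinj
  have hun : (ι (σ p) / ι p) ^ n = 1 := by
    rw [div_pow, ← map_pow ι (σ p), hσpow, map_pow, div_self (pow_ne_zero _ hB)]
  obtain ⟨i, _, hiu⟩ := hζF.eq_pow_of_pow_eq_one hun
  have hσp : σ p = C (ζ ^ i) * p := by
    apply hι
    have h1 : ι (C ζ) ^ i * ι p = ι (σ p) := (eq_div_iff hB).mp hiu
    calc ι (σ p) = ι (C ζ) ^ i * ι p := h1.symm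
      _ = ι (C (ζ ^ i) * p) := by simp only [map_mul, map_pow]
  -- Compare coefficients on the support.
  have hc : ∀ d ∈ p.support, ζ ^ (d 0 + d 1) = ζ ^ i := by
    intro d hd
    have h1 : coeff d (σ p) = ζ ^ (d 0 + d 1) * coeff d p := coeff_scale ζ p d
    have h2 : coeff d (σ p) = ζ ^ i * coeff d p := by
      rw [hσp, coeff_C_mul]
    exact mul_right_cancel₀ (mem_support_iff.mp hd) (h1.symm.trans h2)
  have hmm : ζ ^ (m 0 + m 1) = ζ ^ (m' 0 + m' 1) := (hc m hm).trans (hc m' hm').symm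
  have hζ0 : ζ ≠ 0 := hζ.ne_zero hn0
  have main : ∀ a b : ℕ, a ≤ b → ζ ^ a = ζ ^ b → ((a : ZMod n) = (b : ZMod n)) := by
    intro a b hab h
    have h2 : ζ ^ (b - a) = 1 := by
      apply mul_left_cancel₀ (pow_ne_zero a hζ0)
      rw [mul_one, ← pow_add, Nat.add_sub_cancel' hab]
      exact h.symm
    have hdvd : n ∣ (b - a) := (hζ.pow_eq_one_iff_dvd _).mp h2
    exact (ZMod.natCast_eq_natCast_iff a b n).mpr ((Nat.modEq_iff_dvd' hab).mpr hdvd)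
  rcases le_total (m 0 + m 1) (m' 0 + m' 1) with hle | hle
  · exact main _ _ hle hmm
  · exact (main _ _ hle hmm.symm).symm

/-- If `p ∈ K[x,y]` satisfies `pⁿ ∈ K[x,y]₀`, then `p ∈ K[x,y]ᵢ` for
some `i ∈ ℤ/nℤ`. -/
theorem graded_of_pow_graded (K : Type*) [Field K] [CharZero K] (n : ℕ) (hn : 2 ≤ n)
    (p : MvPolynomial (Fin 2) K) (hp : p ^ n ∈ gradedPiece K n 0) :
    ∃ i : ZMod n, p ∈ gradedPiece K n i := by
  rcases eq_or_ne p 0 with rfl | hp0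
  · exact ⟨0, Submodule.zero_mem _⟩
  have hn0 : n ≠ 0 := by omega
  -- Pass to a cyclotomic extension `L` of `K` containing a primitive `n`-th root of unity.
  set N : ℕ+ := ⟨n, by omega⟩ with hN
  set L := CyclotomicField N K with hL
  haveI : NeZero ((N : ℕ) : K) := ⟨Nat.cast_ne_zero.mpr hn0⟩
  obtain ⟨ζ, hζ⟩ := IsCyclotomicExtension.exists_isPrimitiveRoot K L (n := (N : ℕ))
    (Set.mem_singleton _) hn0
  have hζn : IsPrimitiveRoot ζ n := hζ
  set f : K →+* L := algebraMap K L with hf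
  have hfinj : Function.Injective f := f.injective
  set q : MvPolynomial (Fin 2) L := MvPolynomial.map f p with hq
  have hq0 : q ≠ 0 := fun h => hp0 (MvPolynomial.map_injective f hfinj (by simpa using h))
  have hsupp : q.support = p.support := MvPolynomial.support_map_of_injective p hfinj
  have hsuppn : (q ^ n).support = (p ^ n).support := by
    rw [hq, ← map_pow]
    exact MvPolynomial.support_map_of_injective _ hfinj
  rw [mem_gradedPiece_iff] at hp
  have hqpow : ∀ m ∈ (q ^ n).support, ((m 0 + m 1 : ℕ) : ZMod n) = 0 := by
    intro m hm
    exact hp m (hsuppn ▸ hm)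
  obtain ⟨m₀, hm₀⟩ := MvPolynomial.support_nonempty.mpr hp0
  refine ⟨((m₀ 0 + m₀ 1 : ℕ) : ZMod n), mem_gradedPiece_iff.mpr fun m hm => ?_⟩
  exact key_congruence hn hζn hq0 hqpow (hsupp ▸ hm) (hsupp ▸ hm₀)
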